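/- Let f : ℝ → [0,∞) be a probability density such that log f : ℝ → [−∞,∞) is concave (i.e. f is log-concave). Let T = {T_n} be a sequence of measurable maps T_n : ℝ^n → ℝ such that for every n, every x ∈ ℝ^n and every θ' ∈ ℝ, ∏_{i=1}^n f(x_i − T_n(x)) ≥ ∏_{i=1}^n f(x_i − θ') (i.e. T_n is a maximum likelihood estimator). Then for every θ ∈ ℝ and ε > 0: β^+(T,θ,ε) ≥ sup_{0<s<1} I^s(p_θ‖p_{θ+ε}) and β^−(T,θ,ε) ≥ sup_{0<s<1} I^s(p_{θ−ε}‖p_θ). -/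

import Mathlib

open MeasureTheory Filter Set Topology ENNReal NNReal

/-- `-log x`, with the convention `-log 0 = ∞`, as a map `ℝ≥0∞ → ℝ≥0∞`. -/
noncomputable def negLog (x : ℝ≥0∞) : ℝ≥0∞ :=
  if x = 0 then ⊤ else ENNReal.ofReal (-Real.log x.toReal)

/-- The `n`-fold product (i.i.d.) measure of `p`. -/
noncomputable def prodMeas {Ω : Type*} [MeasurableSpace Ω] (p : Measure Ω) (n : ℕ) :
    Measure (Fin n → Ω) :=
  Measure.pi fun _ => p

/-- `β⁺(T,θ,ε) = liminf (-1/n) log p_θ^n { T_n > θ + ε }`. -/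
noncomputable def betaPlus {Ω : Type*} [MeasurableSpace Ω] (p : ℝ → Measure Ω)
    (T : (n : ℕ) → (Fin n → Ω) → ℝ) (θ ε : ℝ) : ℝ≥0∞ :=
  Filter.atTop.liminf fun n : ℕ =>
    negLog (prodMeas (p θ) n {x | θ + ε < T n x}) / (n : ℝ≥0∞)

/-- `β⁻(T,θ,ε) = liminf (-1/n) log p_θ^n { T_n < θ - ε }`. -/
noncomputable def betaMinus {Ω : Type*} [MeasurableSpace Ω] (p : ℝ → Measure Ω)
    (T : (n : ℕ) → (Fin n → Ω) → ℝ) (θ ε : ℝ) : ℝ≥0∞ :=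
  Filter.atTop.liminf fun n : ℕ =>
    negLog (prodMeas (p θ) n {x | T n x < θ - ε}) / (n : ℝ≥0∞)

/-- The location shift family: `p_θ` has density `x ↦ f (x - θ)` w.r.t. Lebesgue measure. -/
noncomputable def locMeasure (f : ℝ → ℝ) (θ : ℝ) : Measure ℝ :=
  volume.withDensity fun x => ENNReal.ofReal (f (x - θ))

/-- The relative Rényi entropy `I^s(p‖q) = -log ∫ p^s q^(1-s) dμ` of two densities
`p, q` with respect to `μ`. -/
noncomputable def renyi {Ω : Type*} [MeasurableSpace Ω] (μ : Measure Ω)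
    (p q : Ω → ℝ≥0∞) (s : ℝ) : ℝ≥0∞ :=
  negLog (∫⁻ ω, p ω ^ s * q ω ^ (1 - s) ∂μ)

lemma negLog_antitone : Antitone negLog := by
  intro x y hxy
  unfold negLog
  rcases eq_or_ne x 0 with rfl | hx
  · simp [le_top]
  · have hy : y ≠ 0 := fun h => hx (le_antisymm (h ▸ hxy) zero_le)
    rw [if_neg hx, if_neg hy]
    rcases eq_or_ne y ⊤ with rfl | hytop
    · simp [ENNReal.toReal_top, Real.log_zero]
    · apply ENNReal.ofReal_le_ofReal
      have hx0 : 0 < x.toReal := ENNReal.toReal_pos hx (ne_top_of_le_ne_top hytop hxy)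
      have : x.toReal ≤ y.toReal := ENNReal.toReal_mono hytop hxy
      linarith [Real.log_le_log hx0 this]

lemma negLog_of_one_le {x : ℝ≥0∞} (hx : 1 ≤ x) : negLog x = 0 := by
  unfold negLog
  rw [if_neg (by intro h; simp [h] at hx)]
  rcases eq_or_ne x ⊤ with rfl | hxtop
  · simp
  · have : (1:ℝ) ≤ x.toReal := by
      rw [← ENNReal.toReal_one]
      exact ENNReal.toReal_mono hxtop hx
    simp [ENNReal.ofReal_eq_zero]
    linarith [Real.log_nonneg this]

lemma negLog_le_negLog_pow_div (J : ℝ≥0∞) {n : ℕ} (hn : n ≠ 0) :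
    negLog J ≤ negLog (J ^ n) / (n : ℝ≥0∞) := by
  rcases eq_or_ne J 0 with rfl | hJ0
  · rw [zero_pow hn]
    have : negLog 0 = ⊤ := if_pos rfl
    rw [this, ENNReal.top_div_of_ne_top (by simp)]
  rcases le_or_gt 1 J with hJ1 | hJ1
  · rw [negLog_of_one_le hJ1]; exact zero_le
  · have hJtop : J ≠ ⊤ := (hJ1.trans ENNReal.one_lt_top).ne
    have hpow0 : J ^ n ≠ 0 := pow_ne_zero n hJ0
    have h1 : negLog (J ^ n) = (n : ℝ≥0∞) * negLog J := by
      unfold negLog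
      rw [if_neg hpow0, if_neg hJ0, ENNReal.toReal_pow, Real.log_pow]
      rw [← ENNReal.ofReal_natCast n, ← ENNReal.ofReal_mul (by positivity)]
      ring_nf
    rw [h1, mul_div_assoc, ENNReal.mul_div_cancel (by exact_mod_cast hn) (by simp)]

lemma setLIntegral_le_rpow_mul {Ω : Type*} [MeasurableSpace Ω] (μ : Measure Ω)
    {g h : Ω → ℝ≥0∞} (hgtop : ∀ x, g x ≠ ⊤) {A : Set Ω} (hA : MeasurableSet A)
    (hsub : ∀ x ∈ A, g x ≤ h x) {r : ℝ} (hr0 : 0 < r) (hr1 : r < 1) :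
    ∫⁻ x in A, g x ∂μ ≤ ∫⁻ x, g x ^ r * h x ^ (1 - r) ∂μ := by
  refine le_trans (setLIntegral_mono' hA fun x hx => ?_) (setLIntegral_le_lintegral _ _)
  rcases eq_or_ne (g x) 0 with hg0 | hg0
  · rw [hg0]; exact zero_le
  · calc g x = g x ^ (r + (1 - r)) := by norm_num
    _ = g x ^ r * g x ^ (1 - r) := ENNReal.rpow_add r (1-r) hg0 (hgtop x)
    _ ≤ g x ^ r * h x ^ (1 - r) :=
        mul_le_mul_right (ENNReal.rpow_le_rpow (hsub x hx) (by linarith)) _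

lemma lintegral_pi_prod : ∀ (n : ℕ) (g : Fin n → ℝ → ℝ≥0∞), (∀ i, Measurable (g i)) →
    ∫⁻ x : Fin n → ℝ, ∏ i, g i (x i) ∂(Measure.pi fun _ => (volume : Measure ℝ))
      = ∏ i, ∫⁻ y, g i y := by
  intro n
  induction n with
  | zero =>
    intro g hg
    simp [lintegral_const, Measure.pi_univ]
  | succ n ih =>
    intro g hg
    have hmp := (measurePreserving_piFinSuccAbove (fun _ : Fin (n+1) => (volume : Measure ℝ)) 0)
    have hF : Measurable (fun z : ℝ × (Fin n → ℝ) => g 0 z.1 * ∏ j, g (Fin.succ j) (z.2 j)) := by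
      refine ((hg 0).comp measurable_fst).mul ?_
      exact Finset.measurable_prod _ fun j _ =>
        (hg j.succ).comp ((measurable_pi_apply j).comp measurable_snd)
    have key := hmp.lintegral_comp hF
    have heq : ∀ x : Fin (n+1) → ℝ,
        (fun z : ℝ × (Fin n → ℝ) => g 0 z.1 * ∏ j, g (Fin.succ j) (z.2 j))
          ((MeasurableEquiv.piFinSuccAbove (fun _ => ℝ) 0) x) = ∏ i, g i (x i) := by
      intro x
      simp only [MeasurableEquiv.piFinSuccAbove_apply]
      rw [Fin.prod_univ_succ]
      congr 1
    calc ∫⁻ x : Fin (n+1) → ℝ, ∏ i, g i (x i) ∂(Measure.pi fun _ => volume)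
        = ∫⁻ x, (fun z : ℝ × (Fin n → ℝ) => g 0 z.1 * ∏ j, g (Fin.succ j) (z.2 j))
            ((MeasurableEquiv.piFinSuccAbove (fun _ => ℝ) 0) x) ∂(Measure.pi fun _ => volume) := by
          refine lintegral_congr fun x => (heq x).symm
      _ = ∫⁻ z, g 0 z.1 * ∏ j, g (Fin.succ j) (z.2 j)
            ∂((volume : Measure ℝ).prod (Measure.pi fun _ => volume)) := key
      _ = (∫⁻ y, g 0 y) * ∫⁻ w, ∏ j, g (Fin.succ j) (w j) ∂(Measure.pi fun _ => volume) := by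
          exact lintegral_prod_mul (hg 0).aemeasurable
            (Finset.measurable_prod _ fun (j : Fin n) _ =>
              (hg (Fin.succ j)).comp (measurable_pi_apply j)).aemeasurable
      _ = (∫⁻ y, g 0 y) * ∏ j : Fin n, ∫⁻ y, g j.succ y := by
          rw [ih (fun j : Fin n => g (Fin.succ j)) (fun j => hg (Fin.succ j))]
      _ = ∏ i, ∫⁻ y, g i y := (Fin.prod_univ_succ fun i => ∫⁻ y, g i y).symm

lemma pi_withDensity (g : ℝ → ℝ≥0∞) (hg : Measurable g) (hgfin : ∫⁻ x, g x ≠ ⊤) (n : ℕ) :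
    Measure.pi (fun _ : Fin n => volume.withDensity g)
      = ((Measure.pi fun _ : Fin n => volume).withDensity fun x => ∏ i, g (x i)) := by
  haveI : IsFiniteMeasure (volume.withDensity g) := by
    constructor
    rw [withDensity_apply _ MeasurableSet.univ, Measure.restrict_univ]
    exact hgfin.lt_top
  apply Measure.pi_eq
  intro s hs
  rw [withDensity_apply _ (MeasurableSet.univ_pi hs), ← lintegral_indicator (MeasurableSet.univ_pi hs) (f := fun x : Fin n → ℝ => ∏ i, g (x i))]
  have heq : ∀ x : Fin n → ℝ,
      (Set.pi Set.univ s).indicator (fun x => ∏ i, g (x i)) x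
        = ∏ i, (s i).indicator g (x i) := by
    intro x
    by_cases hx : x ∈ Set.pi Set.univ s
    · rw [Set.indicator_of_mem hx]
      exact Finset.prod_congr rfl fun i _ =>
        (Set.indicator_of_mem (hx i (Set.mem_univ i)) g).symm
    · rw [Set.indicator_of_notMem hx]
      rw [Set.mem_univ_pi] at hx
      push_neg at hx
      obtain ⟨i, hi⟩ := hx
      exact (Finset.prod_eq_zero (Finset.mem_univ i)
        (Set.indicator_of_notMem hi g)).symm
  rw [lintegral_congr heq,
    lintegral_pi_prod n (fun _ => (s _).indicator g) (fun i => hg.indicator (hs i))]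
  exact Finset.prod_congr rfl fun i _ =>
    ((withDensity_apply _ (hs i)).trans (lintegral_indicator (hs i) _).symm).symm

lemma prod_between (f : ℝ → ℝ) (hf_nonneg : ∀ x, 0 ≤ f x)
    (hf_logconcave : ∀ x y : ℝ, ∀ t ∈ Icc (0 : ℝ) 1,
      f x ^ t * f y ^ (1 - t) ≤ f (t * x + (1 - t) * y))
    {n : ℕ} (x : Fin n → ℝ) {a b t : ℝ} (ht : t ∈ Icc (0:ℝ) 1)
    (hab : ∏ i, f (x i - a) ≤ ∏ i, f (x i - b)) :
    ∏ i, f (x i - a) ≤ ∏ i, f (x i - (t * a + (1 - t) * b)) := by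
  set c : ℝ := t * a + (1 - t) * b with hc
  have h1 : ∀ i : Fin n, f (x i - a) ^ t * f (x i - b) ^ (1 - t) ≤ f (x i - c) := by
    intro i
    have := hf_logconcave (x i - a) (x i - b) t ht
    have harg : t * (x i - a) + (1 - t) * (x i - b) = x i - c := by rw [hc]; ring
    rwa [harg] at this
  have hLa : 0 ≤ ∏ i, f (x i - a) := Finset.prod_nonneg fun i _ => hf_nonneg _
  have hLb : 0 ≤ ∏ i, f (x i - b) := Finset.prod_nonneg fun i _ => hf_nonneg _
  have h2 : (∏ i, f (x i - a)) ^ t * (∏ i, f (x i - b)) ^ (1 - t) ≤ ∏ i, f (x i - c) := by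
    calc (∏ i, f (x i - a)) ^ t * (∏ i, f (x i - b)) ^ (1 - t)
        = (∏ i, f (x i - a) ^ t) * ∏ i, f (x i - b) ^ (1 - t) := by
          rw [Real.finset_prod_rpow _ _ (fun i _ => hf_nonneg _) t,
            Real.finset_prod_rpow _ _ (fun i _ => hf_nonneg _) (1 - t)]
      _ = ∏ i, f (x i - a) ^ t * f (x i - b) ^ (1 - t) := Finset.prod_mul_distrib.symm
      _ ≤ ∏ i, f (x i - c) := Finset.prod_le_prod
          (fun i _ => mul_nonneg (Real.rpow_nonneg (hf_nonneg _) _)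
            (Real.rpow_nonneg (hf_nonneg _) _)) (fun i _ => h1 i)
  rcases eq_or_lt_of_le hLa with hLa0 | hLa0
  · rw [← hLa0]
    exact Finset.prod_nonneg fun i _ => hf_nonneg _
  · calc ∏ i, f (x i - a) = (∏ i, f (x i - a)) ^ (t + (1 - t)) := by
          norm_num
      _ = (∏ i, f (x i - a)) ^ t * (∏ i, f (x i - a)) ^ (1 - t) := Real.rpow_add hLa0 _ _
      _ ≤ (∏ i, f (x i - a)) ^ t * (∏ i, f (x i - b)) ^ (1 - t) := by
          have hle := Real.rpow_le_rpow hLa hab (by linarith [ht.2] : (0:ℝ) ≤ 1 - t)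
          exact mul_le_mul_of_nonneg_left hle (Real.rpow_nonneg hLa t)
      _ ≤ ∏ i, f (x i - c) := h2

lemma lintegral_ofReal_shift (f : ℝ → ℝ) (hf_nonneg : ∀ x, 0 ≤ f x)
    (hf_int : ∫ x, f x = 1) (θ : ℝ) :
    ∫⁻ x, ENNReal.ofReal (f (x - θ)) = 1 := by
  have hfi : Integrable f := by
    by_contra h
    rw [integral_undef h] at hf_int
    exact one_ne_zero hf_int.symm
  have hint : Integrable (fun x => f (x - θ)) := hfi.comp_sub_right θ
  rw [← ofReal_integral_eq_lintegral_ofReal hint (ae_of_all _ fun x => hf_nonneg _)]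
  rw [integral_sub_right_eq_self f θ, hf_int, ENNReal.ofReal_one]

lemma core_bound (f : ℝ → ℝ) (hf_meas : Measurable f) (hf_nonneg : ∀ x, 0 ≤ f x)
    (hf_int : ∫ x, f x = 1) (θ b : ℝ) (n : ℕ) {A : Set (Fin n → ℝ)} (hA : MeasurableSet A)
    (hsub : ∀ x ∈ A, ∏ i, f (x i - θ) ≤ ∏ i, f (x i - b)) {r : ℝ} (hr : r ∈ Ioo (0:ℝ) 1) :
    prodMeas (locMeasure f θ) n A
      ≤ (∫⁻ y, ENNReal.ofReal (f (y - θ)) ^ r * ENNReal.ofReal (f (y - b)) ^ (1 - r)) ^ n := by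
  have hp : Measurable fun y => ENNReal.ofReal (f (y - θ)) :=
    ENNReal.measurable_ofReal.comp (hf_meas.comp (measurable_id.sub_const θ))
  have hq : Measurable fun y => ENNReal.ofReal (f (y - b)) :=
    ENNReal.measurable_ofReal.comp (hf_meas.comp (measurable_id.sub_const b))
  unfold prodMeas locMeasure
  rw [pi_withDensity _ hp
    (by rw [lintegral_ofReal_shift f hf_nonneg hf_int θ]; exact ENNReal.one_ne_top) n,
    withDensity_apply _ hA]
  refine le_trans (setLIntegral_le_rpow_mul _
      (g := fun x => ∏ i, ENNReal.ofReal (f (x i - θ)))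
      (h := fun x => ∏ i, ENNReal.ofReal (f (x i - b)))
      (fun x => ENNReal.prod_ne_top fun i _ => ENNReal.ofReal_ne_top) hA
      (fun x hx => ?_) hr.1 hr.2) (le_of_eq ?_)
  · rw [← ENNReal.ofReal_prod_of_nonneg (fun i _ => hf_nonneg _),
      ← ENNReal.ofReal_prod_of_nonneg (fun i _ => hf_nonneg _)]
    exact ENNReal.ofReal_le_ofReal (hsub x hx)
  · have heq : ∀ x : Fin n → ℝ,
        (∏ i, ENNReal.ofReal (f (x i - θ))) ^ r * (∏ i, ENNReal.ofReal (f (x i - b))) ^ (1 - r)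
          = ∏ i, ENNReal.ofReal (f (x i - θ)) ^ r * ENNReal.ofReal (f (x i - b)) ^ (1 - r) := by
      intro x
      rw [Finset.prod_mul_distrib, ENNReal.prod_rpow_of_nonneg hr.1.le,
        ENNReal.prod_rpow_of_nonneg (by linarith [hr.2] : (0:ℝ) ≤ 1 - r)]
    rw [lintegral_congr heq, lintegral_pi_prod n
      (fun _ y => ENNReal.ofReal (f (y - θ)) ^ r * ENNReal.ofReal (f (y - b)) ^ (1 - r))
      (fun _ => ((ENNReal.continuous_rpow_const.measurable.comp hp).mul
        (ENNReal.continuous_rpow_const.measurable.comp hq)))]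
    rw [Finset.prod_const, Finset.card_univ, Fintype.card_fin]

/-- Inequalities (4-5-3) and (4-5-4) of Lemma l10 of the paper: for a log-concave density
`f` and any maximum likelihood estimator sequence `T`, one has
`β⁺(T,θ,ε) ≥ sup_{0<s<1} I^s(p_θ‖p_{θ+ε})` and
`β⁻(T,θ,ε) ≥ sup_{0<s<1} I^s(p_{θ-ε}‖p_θ)`. -/
theorem stmt16 (f : ℝ → ℝ) (hf_meas : Measurable f) (hf_nonneg : ∀ x, 0 ≤ f x)
    (hf_int : ∫ x, f x = 1)
    (hf_logconcave : ∀ x y : ℝ, ∀ t ∈ Icc (0 : ℝ) 1,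
      f x ^ t * f y ^ (1 - t) ≤ f (t * x + (1 - t) * y))
    (T : (n : ℕ) → (Fin n → ℝ) → ℝ) (hT_meas : ∀ n, Measurable (T n))
    (hT_mle : ∀ (n : ℕ) (x : Fin n → ℝ) (θ' : ℝ),
      ∏ i, f (x i - θ') ≤ ∏ i, f (x i - T n x))
    (θ ε : ℝ) (hε : 0 < ε) :
    (⨆ s ∈ Ioo (0 : ℝ) 1,
        renyi volume (fun x => ENNReal.ofReal (f (x - θ)))
          (fun x => ENNReal.ofReal (f (x - (θ + ε)))) s)
      ≤ betaPlus (locMeasure f) T θ ε ∧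
    (⨆ s ∈ Ioo (0 : ℝ) 1,
        renyi volume (fun x => ENNReal.ofReal (f (x - (θ - ε))))
          (fun x => ENNReal.ofReal (f (x - θ))) s)
      ≤ betaMinus (locMeasure f) T θ ε := by
  constructor
  · refine iSup₂_le fun s hs => ?_
    set J : ℝ≥0∞ := ∫⁻ y, ENNReal.ofReal (f (y - θ)) ^ s
        * ENNReal.ofReal (f (y - (θ + ε))) ^ (1 - s) with hJ
    have key : ∀ n : ℕ, n ≠ 0 →
        negLog J ≤ negLog (prodMeas (locMeasure f θ) n {x | θ + ε < T n x}) / (n : ℝ≥0∞) := by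
      intro n hn
      have hA : MeasurableSet {x : Fin n → ℝ | θ + ε < T n x} :=
        measurableSet_lt measurable_const (hT_meas n)
      have hsub : ∀ x ∈ {x : Fin n → ℝ | θ + ε < T n x},
          ∏ i, f (x i - θ) ≤ ∏ i, f (x i - (θ + ε)) := by
        intro x hx
        have hTx : θ + ε < T n x := hx
        set Tx := T n x with hTxdef
        have hd : (0:ℝ) < Tx - θ := by linarith
        set t : ℝ := (Tx - (θ + ε)) / (Tx - θ) with htdef
        have ht : t ∈ Icc (0:ℝ) 1 := by
          constructor
          · exact div_nonneg (by linarith) hd.le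
          · rw [div_le_one hd]; linarith
        have hcc : θ + ε = t * θ + (1 - t) * Tx := by
          have h2 : t * (Tx - θ) = Tx - (θ + ε) := by rw [htdef]; exact div_mul_cancel₀ _ hd.ne'
          linarith
        have := prod_between f hf_nonneg hf_logconcave x ht (hT_mle n x θ)
        rwa [← hcc] at this
      have hcore := core_bound f hf_meas hf_nonneg hf_int θ (θ + ε) n hA hsub hs
      calc negLog J ≤ negLog (J ^ n) / (n : ℝ≥0∞) := negLog_le_negLog_pow_div J hn
        _ ≤ negLog (prodMeas (locMeasure f θ) n {x | θ + ε < T n x}) / (n : ℝ≥0∞) :=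
          ENNReal.div_le_div_right (negLog_antitone hcore) _
    unfold betaPlus
    calc renyi volume (fun x => ENNReal.ofReal (f (x - θ)))
          (fun x => ENNReal.ofReal (f (x - (θ + ε)))) s
        = Filter.atTop.liminf fun _ : ℕ => negLog J := (Filter.liminf_const _).symm
      _ ≤ _ := Filter.liminf_le_liminf
          (Filter.eventually_atTop.2 ⟨1, fun n hn => key n (Nat.one_le_iff_ne_zero.mp hn)⟩)
  · refine iSup₂_le fun s hs => ?_
    set J : ℝ≥0∞ := ∫⁻ y, ENNReal.ofReal (f (y - (θ - ε))) ^ s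
        * ENNReal.ofReal (f (y - θ)) ^ (1 - s) with hJ
    have key : ∀ n : ℕ, n ≠ 0 →
        negLog J ≤ negLog (prodMeas (locMeasure f θ) n {x | T n x < θ - ε}) / (n : ℝ≥0∞) := by
      intro n hn
      have hA : MeasurableSet {x : Fin n → ℝ | T n x < θ - ε} :=
        measurableSet_lt (hT_meas n) measurable_const
      have hsub : ∀ x ∈ {x : Fin n → ℝ | T n x < θ - ε},
          ∏ i, f (x i - θ) ≤ ∏ i, f (x i - (θ - ε)) := by
        intro x hx
        have hTx : T n x < θ - ε := hx
        set Tx := T n x with hTxdef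
        have hd : (0:ℝ) < θ - Tx := by linarith
        set t : ℝ := ((θ - ε) - Tx) / (θ - Tx) with htdef
        have ht : t ∈ Icc (0:ℝ) 1 := by
          constructor
          · exact div_nonneg (by linarith) hd.le
          · rw [div_le_one hd]; linarith
        have hcc : θ - ε = t * θ + (1 - t) * Tx := by
          have h2 : t * (θ - Tx) = (θ - ε) - Tx := by rw [htdef]; exact div_mul_cancel₀ _ hd.ne'
          linarith
        have := prod_between f hf_nonneg hf_logconcave x ht (hT_mle n x θ)
        rwa [← hcc] at this
      have hr : (1 - s) ∈ Ioo (0:ℝ) 1 := ⟨by linarith [hs.2], by linarith [hs.1]⟩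
      have hcore := core_bound f hf_meas hf_nonneg hf_int θ (θ - ε) n hA hsub hr
      have hre : (∫⁻ y, ENNReal.ofReal (f (y - θ)) ^ (1 - s)
          * ENNReal.ofReal (f (y - (θ - ε))) ^ (1 - (1 - s))) = J := by
        refine lintegral_congr fun y => ?_
        rw [show (1:ℝ) - (1 - s) = s by ring, mul_comm]
      rw [hre] at hcore
      calc negLog J ≤ negLog (J ^ n) / (n : ℝ≥0∞) := negLog_le_negLog_pow_div J hn
        _ ≤ negLog (prodMeas (locMeasure f θ) n {x | T n x < θ - ε}) / (n : ℝ≥0∞) :=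
          ENNReal.div_le_div_right (negLog_antitone hcore) _
    unfold betaMinus
    calc renyi volume (fun x => ENNReal.ofReal (f (x - (θ - ε))))
          (fun x => ENNReal.ofReal (f (x - θ))) s
        = Filter.atTop.liminf fun _ : ℕ => negLog J := (Filter.liminf_const _).symm
      _ ≤ _ := Filter.liminf_le_liminf
          (Filter.eventually_atTop.2 ⟨1, fun n hn => key n (Nat.one_le_iff_ne_zero.mp hn)⟩)
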